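/- arXiv:1106.5971 — 5 statements merged into one kernel-verified Lean document; each statement's English description precedes it below -/
import Mathlib

section
/- Let P be a continuous probability transition kernel on a finite nonempty alphabet G. Then for every u ∈ [0,1) and every history w, there exists a unique k ∈ ℕ and a unique g ∈ G such that α_k(g|w_{-k:-1}) ≤ u < β_k(g|w_{-k:-1}); in other words, the intervals [α_k(g|w_{-k:-1}), β_k(g|w_{-k:-1})), for k ∈ ℕ and g ∈ G, form a partition of [0,1). -/
open Finset Filter

variable {G : Type*}

/-- The ball of all histories admitting `s` as a suffix.
A history is `w : ℕ → G`, index `i` encoding the symbol `w_{-(i+1)}` (index 0 = most recent).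
A word `s : List G` encodes `(s_{-n},…,s_{-1})` with list index `i` = symbol `s_{-(i+1)}`. -/
def tree (s : List G) : Set (ℕ → G) := {w | ∀ i : Fin s.length, w i = s.get i}

/-- The word `w_{-k:-1}` formed by the last `k` symbols of the history `w`. -/
def word (w : ℕ → G) (k : ℕ) : List G := List.ofFn fun i : Fin k => w i

/-- A probability transition kernel on `G`. -/
def IsKernel [Fintype G] (P : (ℕ → G) → G → ℝ) : Prop :=
  ∀ w, (∀ g, 0 ≤ P w g) ∧ ∑ g, P w g = 1

/-- Total variation distance between distributions on a finite alphabet. -/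
noncomputable def tvDist [Fintype G] (p q : G → ℝ) : ℝ := (1 / 2) * ∑ a, |p a - q a|

/-- Oscillation `η_P(s)` of the kernel `P` on the ball `tree s`. -/
noncomputable def eta [Fintype G] (P : (ℕ → G) → G → ℝ) (s : List G) : ℝ :=
  ⨆ w : tree s, ⨆ z : tree s, tvDist (P w) (P z)

/-- Coupling coefficient `a_{|s|}(g|s)`. -/
noncomputable def aCoef (P : (ℕ → G) → G → ℝ) (g : G) (s : List G) : ℝ :=
  ⨅ w : tree s, P w g

/-- Coupling coefficient `A_{|s|}(s)`. -/
noncomputable def ACoef [Fintype G] (P : (ℕ → G) → G → ℝ) (s : List G) : ℝ :=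
  ∑ g, aCoef P g s

/-- `A_k^- = inf { A_k(s) : |s| = k }`. -/
noncomputable def Aminus [Fintype G] (P : (ℕ → G) → G → ℝ) (k : ℕ) : ℝ :=
  ⨅ s : {s : List G // s.length = k}, ACoef P s.1

/-- Continuity of the kernel: continuity from the product topology (G discrete) to
the total variation distance. -/
def KernelContinuous [Fintype G] (P : (ℕ → G) → G → ℝ) : Prop :=
  ∀ w : ℕ → G, ∀ ε > 0, ∃ k : ℕ, ∀ z : ℕ → G, (∀ i < k, z i = w i) → tvDist (P w) (P z) < ε

/-- `α_k(g | w_{-k:-1})` with the convention `A_{-1}(ε) = a_{-1}(·|ε) = 0`. -/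
noncomputable def alphaCoef [Fintype G] [LinearOrder G] (P : (ℕ → G) → G → ℝ)
    (k : ℕ) (g : G) (w : ℕ → G) : ℝ :=
  (if k = 0 then 0 else ACoef P (word w (k - 1))) +
    ∑ h ∈ univ.filter (fun h => h < g),
      (aCoef P h (word w k) - if k = 0 then 0 else aCoef P h (word w (k - 1)))

/-- `β_k(g | w_{-k:-1})` with the convention `A_{-1}(ε) = a_{-1}(·|ε) = 0`. -/
noncomputable def betaCoef [Fintype G] [LinearOrder G] (P : (ℕ → G) → G → ℝ)
    (k : ℕ) (g : G) (w : ℕ → G) : ℝ :=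
  (if k = 0 then 0 else ACoef P (word w (k - 1))) +
    ∑ h ∈ univ.filter (fun h => h ≤ g),
      (aCoef P h (word w k) - if k = 0 then 0 else aCoef P h (word w (k - 1)))

/-- `φ` is the update rule of `P`: for every `u ∈ [0,1)` and history `w`, `φ u w` is the
(unique) symbol `g` such that `α_k(g|w_{-k:-1}) ≤ u < β_k(g|w_{-k:-1})` for some `k`. -/
def IsUpdateRule [Fintype G] [LinearOrder G] (P : (ℕ → G) → G → ℝ)
    (φ : ℝ → (ℕ → G) → G) : Prop :=
  ∀ u ∈ Set.Ico (0 : ℝ) 1, ∀ w : ℕ → G, ∃ k : ℕ,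
    alphaCoef P k (φ u w) w ≤ u ∧ u < betaCoef P k (φ u w) w


section AuxStmt2

variable [Fintype G]

lemma mem_tree_word_iff (w z : ℕ → G) (k : ℕ) :
    z ∈ tree (word w k) ↔ ∀ i < k, z i = w i := by
  constructor
  · intro h i hi
    have := h ⟨i, by simpa [word] using hi⟩
    simpa [word, List.get_ofFn] using this
  · intro h i
    have hi : (i : ℕ) < k := by simpa [word] using i.2
    rw [h _ hi, List.get_eq_getElem]; simp [word]

lemma w_mem_tree_word (w : ℕ → G) (k : ℕ) : w ∈ tree (word w k) := by
  rw [mem_tree_word_iff]; intro i _; rfl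

lemma aCoef_nonneg {P : (ℕ → G) → G → ℝ} (hP : IsKernel P) (g : G) (s : List G) :
    0 ≤ aCoef P g s :=
  Real.iInf_nonneg fun z => (hP z.1).1 g

lemma aCoef_le {P : (ℕ → G) → G → ℝ} (hP : IsKernel P) {s : List G} {z : ℕ → G}
    (hz : z ∈ tree s) (g : G) : aCoef P g s ≤ P z g :=
  ciInf_le ⟨0, by rintro x ⟨z', rfl⟩; exact (hP z'.1).1 g⟩ (⟨z, hz⟩ : tree s)

lemma aCoef_mono {P : (ℕ → G) → G → ℝ} (hP : IsKernel P) (w : ℕ → G) (g : G) (k : ℕ) :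
    aCoef P g (word w k) ≤ aCoef P g (word w (k + 1)) := by
  haveI : Nonempty ↥(tree (word w (k + 1))) := ⟨⟨w, w_mem_tree_word w (k + 1)⟩⟩
  apply le_ciInf
  rintro ⟨z, hz⟩
  refine aCoef_le hP ?_ g
  rw [mem_tree_word_iff] at hz ⊢
  exact fun i hi => hz i (hi.trans (Nat.lt_succ_self k))

lemma ACoef_le_one {P : (ℕ → G) → G → ℝ} (hP : IsKernel P) (w : ℕ → G) (k : ℕ) :
    ACoef P (word w k) ≤ 1 := by
  have : ACoef P (word w k) ≤ ∑ g, P w g :=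
    Finset.sum_le_sum fun g _ => aCoef_le hP (w_mem_tree_word w k) g
  simpa [(hP w).2] using this

lemma ACoef_word_mono {P : (ℕ → G) → G → ℝ} (hP : IsKernel P) (w : ℕ → G) :
    Monotone fun k => ACoef P (word w k) :=
  monotone_nat_of_le_succ fun k => Finset.sum_le_sum fun g _ => aCoef_mono hP w g k

lemma exists_ACoef_gt {P : (ℕ → G) → G → ℝ} (hP : IsKernel P) (hc : KernelContinuous P)
    (w : ℕ → G) {u : ℝ} (hu : u < 1) : ∃ k, u < ACoef P (word w k) := by
  set n : ℝ := (Fintype.card G : ℝ) with hn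
  have hn0 : 0 ≤ n := Nat.cast_nonneg _
  have hpos : (0 : ℝ) < 2 * n + 1 := by linarith
  set ε : ℝ := (1 - u) / (2 * n + 1) with hε
  have hε0 : 0 < ε := div_pos (by linarith) hpos
  obtain ⟨k, hk⟩ := hc w ε hε0
  refine ⟨k, ?_⟩
  have key : ∀ g, P w g - 2 * ε ≤ aCoef P g (word w k) := by
    intro g
    haveI : Nonempty ↥(tree (word w k)) := ⟨⟨w, w_mem_tree_word w k⟩⟩
    apply le_ciInf
    rintro ⟨z, hz⟩
    have htv := hk z ((mem_tree_word_iff w z k).1 hz)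
    have h1 : |P w g - P z g| ≤ ∑ a, |P w a - P z a| :=
      Finset.single_le_sum (f := fun a => |P w a - P z a|)
        (fun a _ => abs_nonneg _) (Finset.mem_univ g)
    have h2 : P w g - P z g ≤ |P w g - P z g| := le_abs_self _
    have h3 : (1 / 2 : ℝ) * ∑ a, |P w a - P z a| < ε := htv
    linarith
  have hsum : ∑ g, (P w g - 2 * ε) ≤ ACoef P (word w k) :=
    Finset.sum_le_sum fun g _ => key g
  have heq : ∑ g, (P w g - 2 * ε) = 1 - 2 * ε * n := by
    rw [Finset.sum_sub_distrib, (hP w).2, Finset.sum_const, Finset.card_univ]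
    simp [hn]; ring
  have hmul : ε * (2 * n + 1) = 1 - u := by
    rw [hε, div_mul_cancel₀]; exact ne_of_gt hpos
  have : 2 * ε * n < 1 - u := by nlinarith
  linarith [heq ▸ hsum]

end AuxStmt2

/-- Proposition 3 (partition): for a continuous kernel `P`, every `u ∈ [0,1)` and every
history `w`, there is a unique pair `(k, g)` with
`α_k(g|w_{-k:-1}) ≤ u < β_k(g|w_{-k:-1})`: the intervals
`[α_k(g|w_{-k:-1}), β_k(g|w_{-k:-1}))` partition `[0,1)`. -/
theorem stmt_2 [Fintype G] [Nonempty G] [LinearOrder G] (P : (ℕ → G) → G → ℝ)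
    (hP : IsKernel P) (hc : KernelContinuous P) :
    ∀ u ∈ Set.Ico (0 : ℝ) 1, ∀ w : ℕ → G,
      ∃! p : ℕ × G, alphaCoef P p.1 p.2 w ≤ u ∧ u < betaCoef P p.1 p.2 w := by
  classical
  intro u hu w
  obtain ⟨hu0, hu1⟩ := hu
  set A : ℕ → ℝ := fun k => ACoef P (word w k) with hA
  set AP : ℕ → ℝ := fun k => if k = 0 then 0 else ACoef P (word w (k - 1)) with hAPdef
  set d : ℕ → G → ℝ :=
    fun k h => aCoef P h (word w k) - if k = 0 then 0 else aCoef P h (word w (k - 1)) with hd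
  have halpha : ∀ k g, alphaCoef P k g w = AP k + ∑ h ∈ univ.filter (fun h => h < g), d k h :=
    fun k g => rfl
  have hbeta : ∀ k g, betaCoef P k g w = AP k + ∑ h ∈ univ.filter (fun h => h ≤ g), d k h :=
    fun k g => rfl
  have hd0 : ∀ k h, 0 ≤ d k h := by
    intro k h
    cases k with
    | zero => simpa [hd] using aCoef_nonneg hP h (word w 0)
    | succ j => simpa [hd, sub_nonneg] using aCoef_mono hP w h j
  have hAmono : Monotone A := ACoef_word_mono hP w
  have hAPsucc : ∀ k, AP (k + 1) = A k := by intro k; simp [hAPdef, hA]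
  have hsumd : ∀ k, AP k + ∑ h, d k h = A k := by
    intro k
    cases k with
    | zero => simp [hAPdef, hd, hA, ACoef]
    | succ j =>
        simp only [hAPdef, hd, hA, Finset.sum_sub_distrib]
        simp [ACoef]
  have hbeta_le : ∀ k g, betaCoef P k g w ≤ A k := by
    intro k g
    rw [hbeta]
    calc AP k + ∑ h ∈ univ.filter (fun h => h ≤ g), d k h
        ≤ AP k + ∑ h, d k h :=
          add_le_add_right (Finset.sum_le_sum_of_subset_of_nonneg
            (Finset.filter_subset _ _) fun h _ _ => hd0 k h) _
      _ = A k := hsumd k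
  have halpha_ge : ∀ k g, AP k ≤ alphaCoef P k g w := by
    intro k g
    rw [halpha]
    have : 0 ≤ ∑ h ∈ univ.filter (fun h => h < g), d k h :=
      Finset.sum_nonneg fun h _ => hd0 k h
    linarith
  have horder : ∀ k g k' g', (k < k' ∨ (k = k' ∧ g < g')) →
      betaCoef P k g w ≤ alphaCoef P k' g' w := by
    rintro k g k' g' (hkk | ⟨rfl, hgg⟩)
    · have h1 : betaCoef P k g w ≤ A k := hbeta_le k g
      have h2 : A k ≤ AP k' := by
        obtain ⟨j, rfl⟩ := Nat.exists_eq_add_of_lt hkk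
        rw [hAPsucc]
        exact hAmono (Nat.le_add_right k j)
      exact h1.trans (h2.trans (halpha_ge k' g'))
    · rw [hbeta, halpha]
      refine add_le_add_right ?_ _
      refine Finset.sum_le_sum_of_subset_of_nonneg ?_ fun h _ _ => hd0 k h
      intro h hh
      simp only [Finset.mem_filter, Finset.mem_univ, true_and] at hh ⊢
      exact lt_of_le_of_lt hh hgg
  have hex : ∃ k, u < A k := exists_ACoef_gt hP hc w hu1
  have hKlt : u < A (Nat.find hex) := Nat.find_spec hex
  set K := Nat.find hex with hK
  have hAPK : AP K ≤ u := by
    rcases Nat.eq_zero_or_pos K with h0 | hpos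
    · rw [h0]; simpa [hAPdef] using hu0
    · obtain ⟨j, hj⟩ : ∃ j, K = j + 1 := ⟨K - 1, (Nat.succ_pred_eq_of_pos hpos).symm⟩
      have hjK : j < Nat.find hex := by rw [← hK, hj]; exact Nat.lt_succ_self j
      have := Nat.find_min hex hjK
      rw [hj, hAPsucc]
      exact not_lt.1 this
  have hbetatop : betaCoef P K ((Finset.univ : Finset G).max' Finset.univ_nonempty) w = A K := by
    rw [hbeta]
    have heq : univ.filter (fun h => h ≤ (Finset.univ : Finset G).max' Finset.univ_nonempty) = univ := by
      ext h
      simp only [Finset.mem_filter, Finset.mem_univ, true_and, iff_true]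
      exact Finset.le_max' univ h (Finset.mem_univ h)
    rw [heq, hsumd]
  have hSne : (univ.filter (fun g => u < betaCoef P K g w)).Nonempty :=
    ⟨(Finset.univ : Finset G).max' Finset.univ_nonempty,
      Finset.mem_filter.2 ⟨Finset.mem_univ _, by rw [hbetatop]; exact hKlt⟩⟩
  set S : Finset G := univ.filter (fun g => u < betaCoef P K g w) with hS
  set g : G := S.min' hSne with hg
  have hgb : u < betaCoef P K g w := by
    have hgm : g ∈ S := S.min'_mem hSne
    rw [hS] at hgm
    exact (Finset.mem_filter.1 hgm).2
  have hga : alphaCoef P K g w ≤ u := by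
    by_contra hcon
    push_neg at hcon
    rcases (univ.filter (fun h => h < g)).eq_empty_or_nonempty with hTe | hTne
    · rw [halpha, hTe] at hcon
      simp at hcon
      linarith
    · have hg0mem : (univ.filter (fun h => h < g)).max' hTne ∈ univ.filter (fun h => h < g) :=
        Finset.max'_mem _ hTne
      set g0 : G := (univ.filter (fun h => h < g)).max' hTne with hg0
      have hg0g : g0 < g := (Finset.mem_filter.1 hg0mem).2
      have hTeq : univ.filter (fun h => h < g) = univ.filter (fun h => h ≤ g0) := by
        ext h
        simp only [Finset.mem_filter, Finset.mem_univ, true_and]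
        constructor
        · intro hh
          exact Finset.le_max' (univ.filter fun h' => h' < g) h
            (Finset.mem_filter.2 ⟨Finset.mem_univ h, hh⟩)
        · intro hh
          exact lt_of_le_of_lt hh hg0g
      have hab : alphaCoef P K g w = betaCoef P K g0 w := by
        rw [halpha, hbeta, hTeq]
      have hg0S : g0 ∈ S := by
        rw [hS]
        exact Finset.mem_filter.2 ⟨Finset.mem_univ _, by rw [← hab]; exact hcon⟩
      have hle := S.min'_le g0 hg0S
      rw [← hg] at hle
      exact absurd (lt_of_lt_of_le hg0g hle) (lt_irrefl g0)
  refine ⟨(K, g), ⟨hga, hgb⟩, ?_⟩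
  rintro ⟨k', g'⟩ ⟨h1, h2⟩
  have key : ∀ (p q : ℕ × G), alphaCoef P p.1 p.2 w ≤ u → u < betaCoef P q.1 q.2 w →
      ¬ (q.1 < p.1 ∨ (q.1 = p.1 ∧ q.2 < p.2)) := by
    rintro p q hpa hqb hlt
    have := horder q.1 q.2 p.1 p.2 hlt
    linarith
  have hk' : k' = K := by
    rcases lt_trichotomy k' K with h | h | h
    · exact absurd (Or.inl h) (key (K, g) (k', g') hga h2)
    · exact h
    · exact absurd (Or.inl h) (key (k', g') (K, g) h1 hgb)
  subst hk'
  have hg' : g' = g := by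
    rcases lt_trichotomy g' g with h | h | h
    · exact absurd (Or.inr ⟨rfl, h⟩) (key (K, g) (K, g') hga h2)
    · exact h
    · exact absurd (Or.inr ⟨rfl, h⟩) (key (K, g') (K, g) h1 hgb)
  rw [hg']
end

section
/- Let P be a continuous probability transition kernel on a finite nonempty alphabet G and let φ_P be its update rule. Then for every finite word s and every u ∈ [0,1) with u < A_{|s|}(s), the map φ_P(u, ·) is constant on tree(s): for all histories w, z ∈ tree(s), φ_P(u, w) = φ_P(u, z). -/
open Finset Filter

variable {G : Type*}

section Aux

variable [Fintype G] [Nonempty G] {P : (ℕ → G) → G → ℝ}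

lemma my_tree_nonempty (s : List G) : (tree s).Nonempty := by
  classical
  refine ⟨fun i => if h : i < s.length then s.get ⟨i, h⟩ else Classical.arbitrary G, ?_⟩
  intro i
  simp [i.isLt]

lemma my_mem_tree_word {v w : ℕ → G} {k : ℕ} : v ∈ tree (word w k) ↔ ∀ i < k, v i = w i := by
  constructor
  · intro h i hi
    have := h ⟨i, by simpa [word] using hi⟩
    simpa [word] using this
  · intro h i
    have hi : (i : ℕ) < k := by simpa [word] using i.isLt
    exact (h i hi).trans (by cases i; simp [word])

lemma my_bddP (hP : IsKernel P) (g : G) (s : List G) :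
    BddBelow (Set.range fun w : tree s => P w g) :=
  ⟨0, by rintro x ⟨w, rfl⟩; exact (hP w).1 g⟩

lemma my_aCoef_le (hP : IsKernel P) {g : G} {s : List G} {v : ℕ → G} (hv : v ∈ tree s) :
    aCoef P g s ≤ P v g := ciInf_le (my_bddP hP g s) ⟨v, hv⟩

lemma my_aCoef_nonneg (hP : IsKernel P) (g : G) (s : List G) : 0 ≤ aCoef P g s := by
  haveI := (my_tree_nonempty s).to_subtype
  exact le_ciInf fun w => (hP w).1 g

lemma my_aCoef_mono (hP : IsKernel P) {g : G} {s t : List G} (h : tree t ⊆ tree s) :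
    aCoef P g s ≤ aCoef P g t := by
  haveI := (my_tree_nonempty t).to_subtype
  exact le_ciInf fun v => my_aCoef_le hP (h v.2)

lemma my_tree_word_anti (w : ℕ → G) {j k : ℕ} (h : j ≤ k) :
    tree (word w k) ⊆ tree (word w j) := fun v hv =>
  my_mem_tree_word.2 fun i hi => my_mem_tree_word.1 hv i (lt_of_lt_of_le hi h)

lemma my_word_congr {w z : ℕ → G} {k : ℕ} (h : ∀ i < k, w i = z i) : word w k = word z k := by
  unfold word
  exact congrArg List.ofFn (funext fun i => h i i.isLt)

lemma my_word_mem_tree (w : ℕ → G) (s : List G) (hw : w ∈ tree s) : word w s.length = s := by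
  apply List.ext_get (by simp [word])
  intro i h1 h2
  simpa [word] using hw ⟨i, h2⟩

lemma my_term_nonneg (hP : IsKernel P) (k : ℕ) (h : G) (w : ℕ → G) :
    0 ≤ aCoef P h (word w k) - (if k = 0 then 0 else aCoef P h (word w (k - 1))) := by
  rcases Nat.eq_zero_or_pos k with hk | hk
  · simp [hk, my_aCoef_nonneg hP]
  · rw [if_neg hk.ne', sub_nonneg]
    exact my_aCoef_mono hP (my_tree_word_anti w (Nat.sub_le k 1))

lemma my_ACoef_mono (hP : IsKernel P) {j k : ℕ} (h : j ≤ k) (w : ℕ → G) :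
    ACoef P (word w j) ≤ ACoef P (word w k) :=
  Finset.sum_le_sum fun g _ => my_aCoef_mono hP (my_tree_word_anti w h)

lemma my_beta_le_ACoef [LinearOrder G] (hP : IsKernel P) (k : ℕ) (g : G) (w : ℕ → G) :
    betaCoef P k g w ≤ ACoef P (word w k) := by
  have hsub : ∑ h ∈ univ.filter (fun h => h ≤ g),
      (aCoef P h (word w k) - if k = 0 then 0 else aCoef P h (word w (k - 1)))
      ≤ ∑ h : G, (aCoef P h (word w k) - if k = 0 then 0 else aCoef P h (word w (k - 1))) :=
    Finset.sum_le_sum_of_subset_of_nonneg (Finset.filter_subset _ _)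
      (fun h _ _ => my_term_nonneg hP k h w)
  have key : (if k = 0 then (0:ℝ) else ACoef P (word w (k - 1))) +
      ∑ h : G, (aCoef P h (word w k) - if k = 0 then 0 else aCoef P h (word w (k - 1)))
      = ACoef P (word w k) := by
    by_cases hk : k = 0 <;> simp [hk, ACoef, Finset.sum_sub_distrib]
  unfold betaCoef
  linarith

lemma my_ACoef_le_alpha [LinearOrder G] (hP : IsKernel P) (k : ℕ) (g : G) (w : ℕ → G) :
    ACoef P (word w k) ≤ alphaCoef P (k + 1) g w := by
  unfold alphaCoef
  simp only [Nat.add_sub_cancel, Nat.succ_ne_zero, if_false]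
  have h0 : 0 ≤ ∑ h ∈ univ.filter (fun h => h < g),
      (aCoef P h (word w (k + 1)) - aCoef P h (word w k)) :=
    Finset.sum_nonneg fun h _ =>
      sub_nonneg.2 (my_aCoef_mono hP (my_tree_word_anti w (Nat.le_succ k)))
  linarith

lemma my_beta_le_alpha [LinearOrder G] (hP : IsKernel P) (k : ℕ) {g g' : G} (hg : g < g')
    (w : ℕ → G) : betaCoef P k g w ≤ alphaCoef P k g' w := by
  unfold betaCoef alphaCoef
  refine add_le_add_right (Finset.sum_le_sum_of_subset_of_nonneg ?_
    (fun h _ _ => my_term_nonneg hP k h w)) _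
  intro h hh
  simp only [Finset.mem_filter, Finset.mem_univ, true_and] at *
  exact lt_of_le_of_lt hh hg

lemma my_not_lt_witness [LinearOrder G] (hP : IsKernel P) {u : ℝ} {w : ℕ → G}
    {k k' : ℕ} {g g' : G} (h2 : u < betaCoef P k g w) (h1' : alphaCoef P k' g' w ≤ u)
    (hkk : k < k') : False := by
  have a1 : betaCoef P k g w ≤ ACoef P (word w k) := my_beta_le_ACoef hP k g w
  have a2 : ACoef P (word w k) ≤ ACoef P (word w (k' - 1)) := my_ACoef_mono hP (by omega) w
  have a3 : ACoef P (word w (k' - 1)) ≤ alphaCoef P ((k' - 1) + 1) g' w :=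
    my_ACoef_le_alpha hP (k' - 1) g' w
  rw [show k' - 1 + 1 = k' by omega] at a3
  linarith

lemma my_uniq [LinearOrder G] (hP : IsKernel P) {u : ℝ} {w : ℕ → G} {k k' : ℕ} {g g' : G}
    (h1 : alphaCoef P k g w ≤ u) (h2 : u < betaCoef P k g w)
    (h1' : alphaCoef P k' g' w ≤ u) (h2' : u < betaCoef P k' g' w) : g = g' := by
  have hk : k = k' := by
    rcases lt_trichotomy k k' with h | h | h
    · exact absurd (my_not_lt_witness hP h2 h1' h) (not_false)
    · exact h
    · exact absurd (my_not_lt_witness hP h2' h1 h) (not_false)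
  subst hk
  rcases lt_trichotomy g g' with h | h | h
  · have := my_beta_le_alpha hP k h w; linarith
  · exact h
  · have := my_beta_le_alpha hP k h w; linarith

lemma my_alpha_congr [LinearOrder G] {w z : ℕ → G} {k : ℕ} (h : ∀ i < k, w i = z i) (g : G) :
    alphaCoef P k g w = alphaCoef P k g z := by
  unfold alphaCoef
  rw [my_word_congr h, my_word_congr fun i hi => h i (lt_of_lt_of_le hi (Nat.sub_le k 1))]

lemma my_beta_congr [LinearOrder G] {w z : ℕ → G} {k : ℕ} (h : ∀ i < k, w i = z i) (g : G) :
    betaCoef P k g w = betaCoef P k g z := by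
  unfold betaCoef
  rw [my_word_congr h, my_word_congr fun i hi => h i (lt_of_lt_of_le hi (Nat.sub_le k 1))]

end Aux

/-- Proposition 4 (phiOk): the update rule `φ_P` of a continuous kernel `P` satisfies:
for every word `s` and every `u ∈ [0,1)` with `u < A_{|s|}(s)`, `φ_P(u, ·)` is constant
on `tree s`. -/
theorem stmt_4 [Fintype G] [Nonempty G] [LinearOrder G] (P : (ℕ → G) → G → ℝ)
    (hP : IsKernel P) (hc : KernelContinuous P)
    (φ : ℝ → (ℕ → G) → G) (hφ : IsUpdateRule P φ) :
    ∀ s : List G, ∀ u ∈ Set.Ico (0 : ℝ) 1, u < ACoef P s →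
      ∀ w ∈ tree s, ∀ z ∈ tree s, φ u w = φ u z := by
  intro s u hu hus w hw z hz
  set n := s.length with hn
  obtain ⟨k, ha, hb⟩ := hφ u hu w
  obtain ⟨k', ha', hb'⟩ := hφ u hu z
  have hwz : ∀ i < n, w i = z i := fun i hi => by
    rw [hw ⟨i, hi⟩, hz ⟨i, hi⟩]
  have hAs : ACoef P s = ACoef P (word w n) := by rw [my_word_mem_tree w s hw]
  have hk : k ≤ n := by
    by_contra hk
    push_neg at hk
    have e1 : ACoef P (word w n) ≤ ACoef P (word w (k - 1)) := my_ACoef_mono hP (by omega) w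
    have e2 : ACoef P (word w (k - 1)) ≤ alphaCoef P ((k - 1) + 1) (φ u w) w :=
      my_ACoef_le_alpha hP (k - 1) (φ u w) w
    rw [show k - 1 + 1 = k by omega] at e2
    rw [hAs] at hus
    linarith
  have hwzk : ∀ i < k, w i = z i := fun i hi => hwz i (lt_of_lt_of_le hi hk)
  have ha2 : alphaCoef P k (φ u w) z ≤ u := by rw [← my_alpha_congr hwzk]; exact ha
  have hb2 : u < betaCoef P k (φ u w) z := by rw [← my_beta_congr hwzk]; exact hb
  exact my_uniq hP ha2 hb2 ha' hb'
end

section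
/- Let G be a finite nonempty alphabet and let D be a prefix-closed complete suffix dictionary over G. Then for every finite word h that has a suffix in D and for every symbol a ∈ G, the word ha obtained by appending a to h as the new most recent symbol also has a suffix in D. -/
variable {G : Type*}

/-- A complete suffix dictionary: every history has exactly one suffix in `D`. -/
def IsCSD (D : Set (List G)) : Prop := ∀ w : ℕ → G, ∃! s, s ∈ D ∧ w ∈ tree s

/-- A prefix of a word `s = (s_{-n},…,s_{-1})` is a word `(s_{-n},…,s_{-k})`, `1 ≤ k ≤ n`;
in our encoding these are the words `s.drop j` for `j < s.length`. A CSD is prefix-closed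
if every prefix of each of its elements is a suffix of some element. -/
def PrefixClosed (D : Set (List G)) : Prop :=
  ∀ s ∈ D, ∀ j < s.length, ∃ t ∈ D, s.drop j <+: t

lemma mem_tree_of_prefix {s l : List G} (c : G) (hp : s <+: l) :
    (fun i => l.getD i c) ∈ tree s := by
  intro i
  obtain ⟨r, rfl⟩ := hp
  have hi : (i : ℕ) < s.length := i.isLt
  simp [List.getD, List.getElem?_append_left hi, List.getElem?_eq_getElem hi]

lemma prefix_of_agree {t l : List G} (c : G) (hlen : t.length ≤ l.length)
    (hag : (fun i => l.getD i c) ∈ tree t) : t <+: l := by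
  have : t = l.take t.length := by
    apply List.ext_getElem (by simp [hlen])
    intro i h1 h2
    have := hag ⟨i, h1⟩
    have hil : i < l.length := lt_of_lt_of_le h1 hlen
    simp only [List.getD, List.getElem?_eq_getElem hil, Option.getD_some,
      List.get_eq_getElem] at this
    simpa [List.getElem_take, List.getElem?_eq_getElem hil] using this.symm
  rw [this]
  exact List.take_prefix _ _

/-- Lemma: if `D` is a prefix-closed CSD, then for every word `h` having a suffix in `D`
and every symbol `a`, the word `ha` (append `a` as new most recent symbol) also has a
suffix in `D`. -/
theorem stmt_11 [Fintype G] [Nonempty G] (D : Set (List G)) (hD : IsCSD D)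
    (hpc : PrefixClosed D) (h : List G) (hh : ∃ s ∈ D, s <+: h) (a : G) :
    ∃ s ∈ D, s <+: (a :: h) := by
  obtain ⟨s, hsD, hsh⟩ := hh
  obtain ⟨c⟩ := ‹Nonempty G›
  set l : List G := a :: h with hl
  obtain ⟨t, ⟨htD, htw⟩, -⟩ := hD (fun i => l.getD i c)
  by_cases hlen : t.length ≤ l.length
  · exact ⟨t, htD, prefix_of_agree c hlen htw⟩
  · exfalso
    push_neg at hlen
    -- l <+: t
    have hlt : l <+: t := by
      have : (fun i => l.getD i c) ∈ tree l := mem_tree_of_prefix c (List.prefix_refl l)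
      -- show l = t.take l.length
      have heq : l = t.take l.length := by
        apply List.ext_getElem (by simp [le_of_lt hlen])
        intro i h1 h2
        have h1t : i < t.length := lt_trans h1 hlen
        have := htw ⟨i, h1t⟩
        simp only [List.getD, List.getElem?_eq_getElem h1, Option.getD_some,
          List.get_eq_getElem] at this
        simpa [List.getElem_take, List.getElem?_eq_getElem h1] using this
      rw [heq]; exact List.take_prefix _ _
    have h1t : 1 < t.length := lt_of_le_of_lt (by simp [hl]) hlen
    obtain ⟨u, huD, hdu⟩ := hpc t htD 1 h1t
    have hhd : h <+: t.drop 1 := by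
      obtain ⟨r, hr⟩ := hlt
      rw [hl] at hr
      simp [← hr]
    have hsu : s <+: u := hsh.trans (hhd.trans hdu)
    have hw'u : (fun i => u.getD i c) ∈ tree u := mem_tree_of_prefix c (List.prefix_refl u)
    have hw's : (fun i => u.getD i c) ∈ tree s := mem_tree_of_prefix c hsu
    obtain ⟨v, -, hvu⟩ := hD (fun i => u.getD i c)
    have hsv : s = v := hvu s ⟨hsD, hw's⟩
    have huv : u = v := hvu u ⟨huD, hw'u⟩
    have hlen_u : s.length < u.length := by
      have h1 : s.length ≤ h.length := hsh.length_le
      have h2 : t.length - 1 ≤ u.length := by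
        simpa using hdu.length_le
      have h3 : h.length + 1 < t.length := by simpa [hl] using hlen
      omega
    rw [hsv, ← huv] at hlen_u
    exact lt_irrefl _ hlen_u
end

section
/- Let G be a finite nonempty alphabet, Y any type, and f : G^{-ℕ+} → Y a piecewise constant map (i.e., f is D-constant for some complete suffix dictionary D). Then there exists a complete suffix dictionary D^f such that f is D^f-constant and such that for every complete suffix dictionary D' for which f is D'-constant, every element of D' has a suffix in D^f (that is, D' refines D^f). -/
variable {G : Type*}

/-- A map `f` on histories is `D`-constant if it is constant on `tree s` for each `s ∈ D`. -/
def DConstant {Y : Type*} (D : Set (List G)) (f : (ℕ → G) → Y) : Prop :=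
  ∀ s ∈ D, ∀ w ∈ tree s, ∀ z ∈ tree s, f w = f z

def wordOf (w : ℕ → G) (n : ℕ) : List G := List.ofFn (fun i : Fin n => w i)

lemma length_wordOf (w : ℕ → G) (n : ℕ) : (wordOf w n).length = n := List.length_ofFn

lemma mem_tree_wordOf (w : ℕ → G) (n : ℕ) : w ∈ tree (wordOf w n) := by
  intro i
  show w i = (wordOf w n).get i
  rw [List.get_eq_getElem]
  simp [wordOf, List.get_ofFn]

lemma eq_wordOf_of_mem_tree {w : ℕ → G} {t : List G} (h : w ∈ tree t) :
    t = wordOf w t.length := by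
  apply List.ext_get
  · simp [length_wordOf]
  · intro i h1 h2
    have := h ⟨i, h1⟩
    simp [wordOf, List.get_ofFn]
    exact (this.symm.trans (by simp [List.get_eq_getElem]))

lemma wordOf_prefix (w : ℕ → G) {k n : ℕ} (h : k ≤ n) : wordOf w k <+: wordOf w n := by
  rw [List.prefix_iff_eq_take, length_wordOf]
  apply List.ext_get
  · simp [length_wordOf]; omega
  · intro i h1 h2
    simp [wordOf, List.get_ofFn, List.getElem_take]

lemma prefix_wordOf {w : ℕ → G} {t : List G} {n : ℕ} (h : t <+: wordOf w n) :
    t = wordOf w t.length := by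
  apply List.ext_get
  · simp [length_wordOf]
  · intro i h1 h2
    have hn : i < n := by
      have := h.length_le; rw [length_wordOf] at this; omega
    have := h.getElem h1
    simp only [List.get_eq_getElem, this]
    simp [wordOf, List.getElem_ofFn]

/-- Every piecewise constant map `f` has a minimal CSD `D^f`: `f` is `D^f`-constant and
every CSD `D'` on which `f` is constant refines `D^f` (each element of `D'` has a suffix
in `D^f`). -/
theorem stmt_13 [Fintype G] [Nonempty G] {Y : Type*} (f : (ℕ → G) → Y)
    (hf : ∃ D : Set (List G), IsCSD D ∧ DConstant D f) :
    ∃ Df : Set (List G), IsCSD Df ∧ DConstant Df f ∧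
      ∀ D' : Set (List G), IsCSD D' → DConstant D' f →
        ∀ s ∈ D', ∃ t ∈ Df, t <+: s := by
  classical
  obtain ⟨D, hD, hDconst⟩ := hf
  set C : List G → Prop := fun s => ∀ w ∈ tree s, ∀ z ∈ tree s, f w = f z with hC
  set Df : Set (List G) := {s | C s ∧ ∀ t, t <+: s → t ≠ s → ¬ C t} with hDf
  -- every history has some n with C (wordOf w n)
  have hex : ∀ w : ℕ → G, ∃ n, C (wordOf w n) := by
    intro w
    obtain ⟨s, ⟨hsD, hws⟩, -⟩ := hD w
    refine ⟨s.length, ?_⟩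
    rw [← eq_wordOf_of_mem_tree hws]
    exact hDconst s hsD
  have hCSD : IsCSD Df := by
    intro w
    set n := Nat.find (hex w) with hn
    have hCn : C (wordOf w n) := Nat.find_spec (hex w)
    refine ⟨wordOf w n, ⟨⟨hCn, ?_⟩, mem_tree_wordOf w n⟩, ?_⟩
    · intro t ht hne hCt
      have ht' : t = wordOf w t.length := prefix_wordOf ht
      have hlt : t.length < n := by
        have hle : t.length ≤ n := by
          have := ht.length_le; rwa [length_wordOf] at this
        rcases lt_or_eq_of_le hle with h | h
        · exact h
        · exact absurd (by rw [ht', h]) hne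
      exact Nat.find_min (hex w) hlt (by rwa [← ht'])
    · rintro t ⟨⟨hCt, hmin⟩, hwt⟩
      have ht' : t = wordOf w t.length := eq_wordOf_of_mem_tree hwt
      have h1 : ¬ t.length < n := fun h => Nat.find_min (hex w) h (by rwa [← ht'])
      have h2 : ¬ n < t.length := by
        intro h
        refine hmin (wordOf w n) (by rw [ht']; exact wordOf_prefix w h.le) ?_ hCn
        intro heq
        have := congrArg List.length heq
        rw [length_wordOf, ht', length_wordOf] at this
        omega
      have : t.length = n := by omega
      rw [ht', this]
  refine ⟨Df, hCSD, fun s hs => hs.1, ?_⟩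
  intro D' hD' hD'const s hs
  have hCs : C s := hD'const s hs
  set w : ℕ → G := fun i => if h : i < s.length then s.get ⟨i, h⟩ else Classical.arbitrary G
    with hw
  have hws : w ∈ tree s := by
    intro i
    simp [hw, i.isLt]
  obtain ⟨t, ⟨htDf, hwt⟩, -⟩ := hCSD w
  refine ⟨t, htDf, ?_⟩
  have ht' : t = wordOf w t.length := eq_wordOf_of_mem_tree hwt
  have hs' : s = wordOf w s.length := eq_wordOf_of_mem_tree hws
  rcases le_or_gt t.length s.length with h | h
  · rw [ht', hs']; exact wordOf_prefix w h
  · exfalso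
    refine htDf.2 s (by rw [ht', hs']; exact wordOf_prefix w h.le) ?_ hCs
    intro heq
    have := congrArg List.length heq
    omega
end

section
/- Let (Y_m)_{m≥1} be i.i.d. ℕ-valued random variables and set p_k = P(Y_1 ≤ k) for k ∈ ℕ. If ∑_{m=0}^{∞} ∏_{k=0}^{m} p_k = ∞, then almost surely there exists an integer n ≥ 1 such that Y_m ≤ n − m for every 1 ≤ m ≤ n. -/
open MeasureTheory ProbabilityTheory

namespace Stmt16Aux
set_option linter.unusedSectionVars false

variable {Ω : Type*} [MeasurableSpace Ω] (Y : ℕ → Ω → ℕ) {μ : MeasureTheory.Measure Ω}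

/-- event: coalescence constraints at lag `n` for indices in `(j, n]`. -/
def Hset (j n : ℕ) : Set Ω := {ω | ∀ m, j + 1 ≤ m → m ≤ n → Y m ω ≤ n - m}

/-- coalescence event at lag `n`. -/
def Gset (n : ℕ) : Set Ω := Hset Y 0 n

/-- first coalescence at lag `n`. -/
def Fset (n : ℕ) : Set Ω := Gset Y n \ ⋃ i ∈ Finset.Ico 1 n, Gset Y i

lemma Hset_eq (j n : ℕ) :
    Hset Y j n = ⋂ m ∈ Set.Icc (j+1) n, (Y m) ⁻¹' Set.Iic (n - m) := by
  ext ω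
  simp only [Hset, Set.mem_setOf_eq, Set.mem_iInter, Set.mem_Icc, Set.mem_preimage,
    Set.mem_Iic, and_imp]

lemma measurable_Hset (hmeas : ∀ m, Measurable (Y m)) (j n : ℕ) :
    MeasurableSet (Hset Y j n) := by
  rw [Hset_eq]
  exact MeasurableSet.biInter (Set.to_countable _)
    (fun m _ => (hmeas m) measurableSet_Iic)

lemma measurable_Gset (hmeas : ∀ m, Measurable (Y m)) (n : ℕ) :
    MeasurableSet (Gset Y n) := measurable_Hset Y hmeas 0 n

lemma measurable_Fset (hmeas : ∀ m, Measurable (Y m)) (n : ℕ) :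
    MeasurableSet (Fset Y n) :=
  (measurable_Gset Y hmeas n).diff
    (Finset.measurableSet_biUnion _ (fun i _ => measurable_Gset Y hmeas i))

lemma meas_Hset
    (hindep : iIndepFun (fun i : {m : ℕ // 1 ≤ m} => Y i) μ)
    (hident : ∀ m, 1 ≤ m → IdentDistrib (Y m) (Y 1) μ μ) (j n : ℕ) :
    μ (Hset Y j n) = ∏ k ∈ Finset.range (n - j), μ {ω | Y 1 ω ≤ k} := by
  classical
  set T : Finset {m : ℕ // 1 ≤ m} := (Finset.Icc (j+1) n).subtype (fun m => 1 ≤ m) with hT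
  have hmemT : ∀ i : {m : ℕ // 1 ≤ m}, i ∈ T ↔ j + 1 ≤ (i : ℕ) ∧ (i : ℕ) ≤ n := by
    intro i; simp [hT, Finset.mem_subtype]
  have hset : Hset Y j n = ⋂ i ∈ T, (Y i) ⁻¹' (Set.Iic (n - (i:ℕ))) := by
    ext ω
    simp only [Hset, Set.mem_setOf_eq, Set.mem_iInter, Set.mem_preimage, Set.mem_Iic]
    constructor
    · intro h i hi
      exact h i ((hmemT i).1 hi).1 ((hmemT i).1 hi).2
    · intro h m h1 h2
      exact h ⟨m, by omega⟩ ((hmemT _).2 ⟨h1, h2⟩)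
  have hprod := hindep.measure_inter_preimage_eq_mul T
    (sets := fun i => Set.Iic (n - (i:ℕ))) (fun i _ => measurableSet_Iic)
  rw [hset, hprod]
  have hident' : ∀ i ∈ T, μ ((Y i) ⁻¹' Set.Iic (n - (i:ℕ)))
      = μ {ω | Y 1 ω ≤ n - (i:ℕ)} := by
    intro i _
    have := (hident i i.2).measure_mem_eq (s := Set.Iic (n - (i:ℕ))) measurableSet_Iic
    simpa [Set.preimage, Set.mem_Iic] using this
  rw [Finset.prod_congr rfl hident']
  -- now reindex the product
  rw [hT, Finset.prod_subtype_of_mem (fun m => μ {ω | Y 1 ω ≤ n - m})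
    (by intro x hx; simp only [Finset.mem_Icc] at hx; omega)]
  refine Finset.prod_nbij' (fun m => n - m) (fun k => n - k) ?_ ?_ ?_ ?_ ?_ <;>
    simp only [Finset.mem_Icc, Finset.mem_range, and_imp]
  all_goals intros; first | omega | trivial

lemma meas_Gset
    (hindep : iIndepFun (fun i : {m : ℕ // 1 ≤ m} => Y i) μ)
    (hident : ∀ m, 1 ≤ m → IdentDistrib (Y m) (Y 1) μ μ) (n : ℕ) :
    μ (Gset Y n) = ∏ k ∈ Finset.range n, μ {ω | Y 1 ω ≤ k} := by
  simpa [Gset] using meas_Hset Y hindep hident 0 n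


lemma meas_FH (hmeas : ∀ m, Measurable (Y m))
    (hindep : iIndepFun (fun i : {m : ℕ // 1 ≤ m} => Y i) μ)
    (j n : ℕ) (hj : 1 ≤ j) :
    μ (Fset Y j ∩ Hset Y j n) = μ (Fset Y j) * μ (Hset Y j n) := by
  classical
  set S : Finset {m : ℕ // 1 ≤ m} := (Finset.Icc 1 j).subtype (fun m => 1 ≤ m) with hS
  set T : Finset {m : ℕ // 1 ≤ m} := (Finset.Icc (j+1) n).subtype (fun m => 1 ≤ m) with hT
  have hmemS : ∀ i : {m : ℕ // 1 ≤ m}, i ∈ S ↔ (i : ℕ) ≤ j := by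
    intro i
    simp only [hS, Finset.mem_subtype, Finset.mem_Icc]
    exact ⟨fun h => h.2, fun h => ⟨i.2, h⟩⟩
  have hmemT : ∀ i : {m : ℕ // 1 ≤ m}, i ∈ T ↔ j + 1 ≤ (i : ℕ) ∧ (i : ℕ) ≤ n := by
    intro i; simp [hT, Finset.mem_subtype]
  have hdisj : Disjoint S T := by
    rw [Finset.disjoint_left]
    intro a haS haT
    rw [hmemS] at haS
    rw [hmemT] at haT
    omega
  have hIF := hindep.indepFun_finset S T hdisj (fun i => hmeas i)
  set A : Set (S → ℕ) := {v | (∀ i : S, v i ≤ j - (i.1 : ℕ)) ∧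
      ∀ k ∈ Finset.Ico 1 j, ¬ (∀ i : S, (i.1 : ℕ) ≤ k → v i ≤ k - (i.1 : ℕ))} with hA
  set B : Set (T → ℕ) := {v | ∀ i : T, v i ≤ n - (i.1 : ℕ)} with hB
  have hGiff : ∀ k, k ≤ j → ∀ ω : Ω,
      (ω ∈ Gset Y k ↔ ∀ i : S, (i.1 : ℕ) ≤ k → Y i.1 ω ≤ k - (i.1 : ℕ)) := by
    intro k hk ω
    constructor
    · intro h i hik
      exact h (i.1 : ℕ) i.1.2 hik
    · intro h m h1 h2
      have h1' : 1 ≤ m := by omega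
      exact h ⟨⟨m, h1'⟩, (hmemS _).2 (by simpa using by omega)⟩ h2
  have hF : Fset Y j = (fun a (i : S) => Y i.1 a) ⁻¹' A := by
    ext ω
    simp only [Fset, Set.mem_diff, Set.mem_iUnion, Set.mem_preimage, hA, Set.mem_setOf_eq,
      not_exists, exists_prop]
    constructor
    · rintro ⟨hg, hng⟩
      refine ⟨fun i => (hGiff j le_rfl ω).1 hg i ((hmemS i.1).1 i.2), ?_⟩
      intro k hk hcon
      have hk' := Finset.mem_Ico.mp hk
      exact hng k ⟨hk, (hGiff k (by omega) ω).2 hcon⟩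
    · rintro ⟨h1, h2⟩
      refine ⟨(hGiff j le_rfl ω).2 (fun i _ => h1 i), ?_⟩
      rintro k ⟨hk, hgk⟩
      have hk' := Finset.mem_Ico.mp hk
      exact h2 k hk ((hGiff k (by omega) ω).1 hgk)
  have hH : Hset Y j n = (fun a (i : T) => Y i.1 a) ⁻¹' B := by
    ext ω
    simp only [Hset, Set.mem_setOf_eq, Set.mem_preimage, hB]
    constructor
    · intro h i
      exact h (i.1 : ℕ) ((hmemT i.1).1 i.2).1 ((hmemT i.1).1 i.2).2
    · intro h m h1 h2
      exact h ⟨⟨m, by omega⟩, (hmemT _).2 ⟨h1, h2⟩⟩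
  have hAm : MeasurableSet A := (Set.to_countable A).measurableSet
  have hBm : MeasurableSet B := (Set.to_countable B).measurableSet
  rw [hF, hH]
  exact hIF.measure_inter_preimage_eq_mul A B hAm hBm


lemma Gset_subset_biUnion (n : ℕ) (hn : 1 ≤ n) :
    Gset Y n ⊆ ⋃ j ∈ Finset.Icc 1 n, (Fset Y j ∩ Hset Y j n) := by
  classical
  intro ω hω
  have hPn : ω ∈ Gset Y ((n - 1) + 1) := by
    have hn1 : (n - 1) + 1 = n := by omega
    rw [hn1]; exact hω
  haveI : DecidablePred (fun k => ω ∈ Gset Y (k + 1)) := Classical.decPred _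
  have hex : ∃ k, ω ∈ Gset Y (k + 1) := ⟨n - 1, hPn⟩
  set k0 := Nat.find hex + 1 with hk0
  have hk0G : ω ∈ Gset Y k0 := Nat.find_spec hex
  have hk0n : k0 ≤ n := by
    have := Nat.find_le (h := hex) hPn
    omega
  have hk0min : ∀ i, 1 ≤ i → i < k0 → ω ∉ Gset Y i := by
    intro i h1 h2 hcon
    have : ω ∈ Gset Y ((i - 1) + 1) := by
      have : (i - 1) + 1 = i := by omega
      rw [this]; exact hcon
    have := Nat.find_min hex (m := i - 1) (by omega)
    exact this ‹ω ∈ Gset Y ((i - 1) + 1)›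
  refine Set.mem_biUnion (Finset.mem_Icc.mpr ⟨by omega, hk0n⟩) ⟨⟨hk0G, ?_⟩, ?_⟩
  · intro hcon
    simp only [Set.mem_iUnion, exists_prop] at hcon
    obtain ⟨i, hi, hgi⟩ := hcon
    rw [Finset.mem_Ico] at hi
    exact hk0min i hi.1 hi.2 hgi
  · intro m h1 h2
    exact hω m (by omega) h2

lemma Fset_subset_Gset (n : ℕ) : Fset Y n ⊆ Gset Y n := Set.diff_subset

lemma Fset_disjoint {i j : ℕ} (hi : 1 ≤ i) (hij : i < j) :
    Disjoint (Fset Y i) (Fset Y j) := by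
  rw [Set.disjoint_left]
  intro ω hωi hωj
  exact hωj.2 (Set.mem_biUnion (Finset.mem_Ico.mpr ⟨hi, hij⟩) hωi.1)

open ENNReal in
lemma arith_bound (u c : ℕ → ℝ≥0∞) (hu0 : u 0 = 1) (hu1 : ∀ n, u n ≤ 1)
    (hclt : ∑' k, c k < 1)
    (key : ∀ n, u (n + 1) ≤ ∑ k ∈ Finset.range (n + 1), c k * u (n - k)) :
    ∑' n, u (n + 1) ≠ ⊤ := by
  set f := ∑' k, c k with hf
  have hfin : ∀ N, ∑ n ∈ Finset.range N, u (n + 1) ≠ ⊤ := by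
    intro N
    exact (lt_of_le_of_lt (Finset.sum_le_sum fun n _ => hu1 (n + 1))
      (by simp)).ne
  have hSN : ∀ N, ∑ n ∈ Finset.range N, u (n + 1)
      ≤ f * (1 + ∑ n ∈ Finset.range N, u (n + 1)) := by
    intro N
    calc ∑ n ∈ Finset.range N, u (n + 1)
        ≤ ∑ n ∈ Finset.range N, ∑ k ∈ Finset.range (n + 1), c k * u (n - k) :=
          Finset.sum_le_sum fun n _ => key n
      _ = ∑ m ∈ Finset.range N, ∑ k ∈ Finset.range (N - m), c m * u k :=
          Finset.sum_range_diag_flip N (fun a b => c a * u b)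
      _ = ∑ m ∈ Finset.range N, c m * ∑ k ∈ Finset.range (N - m), u k := by
          simp [Finset.mul_sum]
      _ ≤ ∑ m ∈ Finset.range N, c m * (1 + ∑ n ∈ Finset.range N, u (n + 1)) := by
          refine Finset.sum_le_sum fun m _ => mul_le_mul_right ?_ _
          calc ∑ k ∈ Finset.range (N - m), u k
              ≤ ∑ k ∈ Finset.range (N + 1), u k :=
                Finset.sum_le_sum_of_subset (Finset.range_subset_range.mpr (by omega))
            _ = (∑ n ∈ Finset.range N, u (n + 1)) + u 0 := Finset.sum_range_succ' u N
            _ = 1 + ∑ n ∈ Finset.range N, u (n + 1) := by rw [hu0, add_comm]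
      _ ≤ f * (1 + ∑ n ∈ Finset.range N, u (n + 1)) := by
          rw [← Finset.sum_mul]
          exact mul_le_mul_left (ENNReal.sum_le_tsum _) _
  have hfne : f ≠ ⊤ := (lt_of_lt_of_le hclt le_top).ne
  have hb1 : f.toReal < 1 := by
    have := (ENNReal.toReal_lt_toReal hfne ENNReal.one_ne_top).mpr hclt
    simpa using this
  have hbound : ∀ N, ∑ n ∈ Finset.range N, u (n + 1)
      ≤ ENNReal.ofReal (f.toReal / (1 - f.toReal)) := by
    intro N
    have h := hSN N
    have h1S : (1 : ℝ≥0∞) + ∑ n ∈ Finset.range N, u (n + 1) ≠ ⊤ :=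
      ENNReal.add_ne_top.mpr ⟨ENNReal.one_ne_top, hfin N⟩
    have hmulne : f * (1 + ∑ n ∈ Finset.range N, u (n + 1)) ≠ ⊤ :=
      ENNReal.mul_ne_top hfne h1S
    have key2 : (∑ n ∈ Finset.range N, u (n + 1)).toReal
        ≤ f.toReal * (1 + (∑ n ∈ Finset.range N, u (n + 1)).toReal) := by
      have h2 := ENNReal.toReal_mono hmulne h
      rwa [ENNReal.toReal_mul, ENNReal.toReal_add ENNReal.one_ne_top (hfin N),
        ENNReal.toReal_one] at h2
    have ha : (∑ n ∈ Finset.range N, u (n + 1)).toReal ≤ f.toReal / (1 - f.toReal) := by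
      have h0 : (0:ℝ) ≤ (∑ n ∈ Finset.range N, u (n + 1)).toReal := ENNReal.toReal_nonneg
      have hb0 : (0:ℝ) ≤ f.toReal := ENNReal.toReal_nonneg
      rw [le_div_iff₀ (by linarith)]
      nlinarith
    calc ∑ n ∈ Finset.range N, u (n + 1)
        = ENNReal.ofReal (∑ n ∈ Finset.range N, u (n + 1)).toReal :=
          (ENNReal.ofReal_toReal (hfin N)).symm
      _ ≤ ENNReal.ofReal (f.toReal / (1 - f.toReal)) := ENNReal.ofReal_le_ofReal ha
  have htsum : ∑' n, u (n + 1) ≤ ENNReal.ofReal (f.toReal / (1 - f.toReal)) := by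
    rw [ENNReal.tsum_eq_iSup_nat]
    exact iSup_le hbound
  exact ne_top_of_le_ne_top ENNReal.ofReal_ne_top htsum

end Stmt16Aux

open Stmt16Aux in
/-- For i.i.d. ℕ-valued random variables `(Y_m)_{m ≥ 1}` with `p_k = P(Y_1 ≤ k)`, if
`∑_{m=0}^∞ ∏_{k=0}^m p_k = ∞`, then almost surely there exists `n ≥ 1` such that
`Y_m ≤ n − m` for every `1 ≤ m ≤ n` (the coalescence event at some lag `n` occurs). -/
theorem stmt_16 {Ω : Type*} [MeasurableSpace Ω] (μ : Measure Ω) [IsProbabilityMeasure μ]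
    (Y : ℕ → Ω → ℕ) (hmeas : ∀ m, Measurable (Y m))
    (hindep : iIndepFun (fun i : {m : ℕ // 1 ≤ m} => Y i) μ)
    (hident : ∀ m, 1 ≤ m → IdentDistrib (Y m) (Y 1) μ μ)
    (hdiv : ∑' m : ℕ, ∏ k ∈ Finset.range (m + 1), μ {ω | Y 1 ω ≤ k} = ⊤) :
    ∀ᵐ ω ∂μ, ∃ n : ℕ, 1 ≤ n ∧ ∀ m, 1 ≤ m → m ≤ n → Y m ω ≤ n - m := by
  classical
  -- abbreviations
  let u : ℕ → ENNReal := fun n => ∏ k ∈ Finset.range n, μ {ω | Y 1 ω ≤ k}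
  let c : ℕ → ENNReal := fun k => μ (Fset Y (k + 1))
  have hGu : ∀ n, μ (Gset Y n) = u n := fun n => meas_Gset Y hindep hident n
  have hHu : ∀ j n, μ (Hset Y j n) = u (n - j) := fun j n => meas_Hset Y hindep hident j n
  have hu0 : u 0 = 1 := by simp [u]
  have hu1 : ∀ n, u n ≤ 1 :=
    fun n => Finset.prod_le_one (fun _ _ => zero_le) (fun _ _ => prob_le_one)
  -- the target event
  set E : Set Ω := {ω | ∃ n : ℕ, 1 ≤ n ∧ ∀ m, 1 ≤ m → m ≤ n → Y m ω ≤ n - m} with hE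
  have hEeq : E = ⋃ k : ℕ, Fset Y (k + 1) := by
    ext ω
    simp only [hE, Set.mem_setOf_eq, Set.mem_iUnion]
    constructor
    · rintro ⟨n, hn, hco⟩
      have hωG : ω ∈ Gset Y n := by
        simp only [Gset, Hset, Set.mem_setOf_eq]
        intro m h1 h2
        exact hco m (by omega) h2
      have hmem := Gset_subset_biUnion Y n hn hωG
      simp only [Set.mem_iUnion, exists_prop] at hmem
      obtain ⟨j, hj, hjFH⟩ := hmem
      rw [Finset.mem_Icc] at hj
      refine ⟨j - 1, ?_⟩
      have hj1 : j - 1 + 1 = j := by omega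
      rw [hj1]
      exact hjFH.1
    · rintro ⟨k, hk⟩
      have hωG : ω ∈ Gset Y (k + 1) := Fset_subset_Gset Y (k + 1) hk
      exact ⟨k + 1, by omega, fun m h1 h2 => hωG m (by omega) h2⟩
  have hEmeas : MeasurableSet E := by
    rw [hEeq]
    exact MeasurableSet.iUnion fun k => measurable_Fset Y hmeas _
  have hdisjF : Pairwise (Function.onFun Disjoint fun k => Fset Y (k + 1)) := by
    intro i j hij
    rcases lt_or_gt_of_ne hij with h | h
    · exact Fset_disjoint Y (by omega) (by omega)
    · exact (Fset_disjoint Y (by omega) (by omega)).symm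
  have hμE : μ E = ∑' k, c k := by
    rw [hEeq]
    exact measure_iUnion hdisjF fun k => measurable_Fset Y hmeas _
  -- the key renewal inequality
  have hKey : ∀ n : ℕ, u (n + 1) ≤ ∑ k ∈ Finset.range (n + 1), c k * u (n - k) := by
    intro n
    have h1 : μ (Gset Y (n + 1))
        ≤ ∑ j ∈ Finset.Icc 1 (n + 1), μ (Fset Y j ∩ Hset Y j (n + 1)) :=
      le_trans (measure_mono (Gset_subset_biUnion Y (n + 1) (by omega)))
        (measure_biUnion_finset_le _ _)
    have h2 : ∑ j ∈ Finset.Icc 1 (n + 1), μ (Fset Y j ∩ Hset Y j (n + 1))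
        = ∑ j ∈ Finset.Icc 1 (n + 1), μ (Fset Y j) * u ((n + 1) - j) := by
      refine Finset.sum_congr rfl fun j hj => ?_
      rw [Finset.mem_Icc] at hj
      rw [meas_FH Y hmeas hindep j (n + 1) hj.1, hHu j (n + 1)]
    have h3 : ∑ j ∈ Finset.Icc 1 (n + 1), μ (Fset Y j) * u ((n + 1) - j)
        = ∑ k ∈ Finset.range (n + 1), c k * u (n - k) := by
      rw [← Finset.Ico_add_one_right_eq_Icc, Finset.sum_Ico_eq_sum_range]
      refine Finset.sum_congr (by norm_num) fun i hi => ?_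
      have e1 : 1 + i = i + 1 := by omega
      rw [e1, Nat.succ_sub_succ]
    rw [← hGu (n + 1)]
    exact h1.trans (le_of_eq (h2.trans h3))
  -- conclude that the total mass of the F's is 1
  have hc1 : ∑' k, c k = 1 := by
    by_contra hne
    have hlt : ∑' k, c k < 1 := lt_of_le_of_ne (hμE ▸ prob_le_one) hne
    exact arith_bound u c hu0 hu1 hlt hKey hdiv
  have hμE1 : μ E = 1 := hμE.trans hc1
  rw [ae_iff]
  have hcompl : μ Eᶜ = 0 := by
    rw [measure_compl hEmeas (measure_ne_top μ E), hμE1]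
    simp
  exact hcompl
end
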